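/- Let H_m and H_n be complex Hadamard matrices of orders m and n respectively, and let H = H_m ⊗ H_n be their Kronecker product, the complex Hadamard matrix of order mn with entries H((i₁,i₂),(j₁,j₂)) = H_m(i₁,j₁) · H_n(i₂,j₂), where rows and columns are indexed by pairs (i₁,i₂) and (j₁,j₂) with i₁, j₁ ∈ {0,…,m−1} and i₂, j₂ ∈ {0,…,n−1}. Then for any complex numbers a₀,…,a_{n−1} each of absolute value 1, the matrix K defined by K((i₁,i₂),(j₁,j₂)) = a_{j₂} · H_m(i₁,j₁) · H_n(i₂,j₂) when i₁ = 0 and K((i₁,i₂),(j₁,j₂)) = H_m(i₁,j₁) · H_n(i₂,j₂) when i₁ ≠ 0 is a complex Hadamard matrix of order mn. -/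

import Mathlib

/-- Rank 1 switchings of Kronecker products: if `H = H_m ⊗ H_n` is a Kronecker product of
complex Hadamard matrices, then multiplying, within the first `n` rows (those with
`i₁ = 0`), the `j₂`-th column of each block by a unimodular constant `a j₂` yields a
complex Hadamard matrix of order `mn`. -/
theorem stmt_8 (m n : ℕ) (hm : 0 < m)
    (Hm : Matrix (Fin m) (Fin m) ℂ) (Hn : Matrix (Fin n) (Fin n) ℂ)
    (hmEnt : ∀ i j, ‖Hm i j‖ = 1)
    (hmHad : Hm * Hm.conjTranspose = (m : ℂ) • 1)
    (hnEnt : ∀ i j, ‖Hn i j‖ = 1)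
    (hnHad : Hn * Hn.conjTranspose = (n : ℂ) • 1)
    (a : Fin n → ℂ) (ha : ∀ j, ‖a j‖ = 1)
    (K : Matrix (Fin m × Fin n) (Fin m × Fin n) ℂ)
    (hK : ∀ (i₁ j₁ : Fin m) (i₂ j₂ : Fin n), K (i₁, i₂) (j₁, j₂) =
      if i₁ = (⟨0, hm⟩ : Fin m) then a j₂ * (Hm i₁ j₁ * Hn i₂ j₂)
      else Hm i₁ j₁ * Hn i₂ j₂) :
    (∀ p q, ‖K p q‖ = 1) ∧
      K * K.conjTranspose = ((m * n : ℕ) : ℂ) • 1 := by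
  have haa : ∀ j, a j * star (a j) = 1 := by
    intro j
    rw [show star (a j) = (starRingEnd ℂ) (a j) from rfl, Complex.mul_conj,
      Complex.normSq_eq_norm_sq, ha]
    norm_num
  have hSm : ∀ i k : Fin m, (∑ j, Hm i j * star (Hm k j)) =
      if i = k then (m : ℂ) else 0 := by
    intro i k
    have := congrFun (congrFun hmHad i) k
    simpa [Matrix.mul_apply, Matrix.conjTranspose_apply, Matrix.one_apply,
      Matrix.smul_apply, mul_ite, mul_one, mul_zero] using this
  have hSn : ∀ i k : Fin n, (∑ j, Hn i j * star (Hn k j)) =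
      if i = k then (n : ℂ) else 0 := by
    intro i k
    have := congrFun (congrFun hnHad i) k
    simpa [Matrix.mul_apply, Matrix.conjTranspose_apply, Matrix.one_apply,
      Matrix.smul_apply, mul_ite, mul_one, mul_zero] using this
  constructor
  · rintro ⟨i₁, i₂⟩ ⟨j₁, j₂⟩
    rw [hK]
    split
    · simp [map_mul, hmEnt, hnEnt, ha]
    · simp [map_mul, hmEnt, hnEnt]
  · ext ⟨i₁, i₂⟩ ⟨k₁, k₂⟩
    simp only [Matrix.mul_apply, Matrix.conjTranspose_apply, Fintype.sum_prod_type,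
      Matrix.smul_apply, Matrix.one_apply, hK, Prod.mk.injEq]
    by_cases h1 : i₁ = (⟨0, hm⟩ : Fin m) <;> by_cases h2 : k₁ = (⟨0, hm⟩ : Fin m) <;>
      simp only [h1, h2, if_true, if_false]
    · -- i₁ = 0, k₁ = 0
      have key : ∀ (j₁ : Fin m) (j₂ : Fin n),
          a j₂ * (Hm ⟨0, hm⟩ j₁ * Hn i₂ j₂) * star (a j₂ * (Hm ⟨0, hm⟩ j₁ * Hn k₂ j₂)) =
          (Hm ⟨0, hm⟩ j₁ * star (Hm ⟨0, hm⟩ j₁)) * (Hn i₂ j₂ * star (Hn k₂ j₂)) := by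
        intro j₁ j₂
        simp only [star_mul']
        linear_combination
          (Hm ⟨0, hm⟩ j₁ * star (Hm ⟨0, hm⟩ j₁) * Hn i₂ j₂ * star (Hn k₂ j₂)) * haa j₂
      rw [show (∑ j₁ : Fin m, ∑ j₂ : Fin n,
          a j₂ * (Hm ⟨0, hm⟩ j₁ * Hn i₂ j₂) * star (a j₂ * (Hm ⟨0, hm⟩ j₁ * Hn k₂ j₂))) =
          (∑ j₁ : Fin m, Hm ⟨0, hm⟩ j₁ * star (Hm ⟨0, hm⟩ j₁)) *
          (∑ j₂ : Fin n, Hn i₂ j₂ * star (Hn k₂ j₂)) by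
        rw [Finset.sum_mul_sum]
        exact Finset.sum_congr rfl fun j₁ _ => Finset.sum_congr rfl fun j₂ _ => key j₁ j₂]
      rw [hSm, hSn]
      push_cast
      split_ifs <;> simp_all <;> ring
    · -- i₁ = 0, k₁ ≠ 0
      have key : ∀ (j₁ : Fin m) (j₂ : Fin n),
          a j₂ * (Hm ⟨0, hm⟩ j₁ * Hn i₂ j₂) * star (Hm k₁ j₁ * Hn k₂ j₂) =
          (Hm ⟨0, hm⟩ j₁ * star (Hm k₁ j₁)) * (a j₂ * Hn i₂ j₂ * star (Hn k₂ j₂)) := by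
        intro j₁ j₂
        simp only [star_mul']
        ring
      rw [show (∑ j₁ : Fin m, ∑ j₂ : Fin n,
          a j₂ * (Hm ⟨0, hm⟩ j₁ * Hn i₂ j₂) * star (Hm k₁ j₁ * Hn k₂ j₂)) =
          (∑ j₁ : Fin m, Hm ⟨0, hm⟩ j₁ * star (Hm k₁ j₁)) *
          (∑ j₂ : Fin n, a j₂ * Hn i₂ j₂ * star (Hn k₂ j₂)) by
        rw [Finset.sum_mul_sum]
        exact Finset.sum_congr rfl fun j₁ _ => Finset.sum_congr rfl fun j₂ _ => key j₁ j₂]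
      rw [hSm]
      rw [if_neg (by simpa [eq_comm] using h2)]
      simp only [zero_mul]
      rw [if_neg (fun h => h2 h.1.symm), smul_zero]
    · -- i₁ ≠ 0, k₁ = 0
      have key : ∀ (j₁ : Fin m) (j₂ : Fin n),
          Hm i₁ j₁ * Hn i₂ j₂ * star (a j₂ * (Hm ⟨0, hm⟩ j₁ * Hn k₂ j₂)) =
          (Hm i₁ j₁ * star (Hm ⟨0, hm⟩ j₁)) * (star (a j₂) * Hn i₂ j₂ * star (Hn k₂ j₂)) := by
        intro j₁ j₂
        simp only [star_mul']
        ring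
      rw [show (∑ j₁ : Fin m, ∑ j₂ : Fin n,
          Hm i₁ j₁ * Hn i₂ j₂ * star (a j₂ * (Hm ⟨0, hm⟩ j₁ * Hn k₂ j₂))) =
          (∑ j₁ : Fin m, Hm i₁ j₁ * star (Hm ⟨0, hm⟩ j₁)) *
          (∑ j₂ : Fin n, star (a j₂) * Hn i₂ j₂ * star (Hn k₂ j₂)) by
        rw [Finset.sum_mul_sum]
        exact Finset.sum_congr rfl fun j₁ _ => Finset.sum_congr rfl fun j₂ _ => key j₁ j₂]
      rw [hSm, if_neg h1]
      simp only [zero_mul]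
      rw [if_neg (fun h : False ∧ i₂ = k₂ => h.1.elim), smul_zero]
    · -- i₁ ≠ 0, k₁ ≠ 0
      have key : ∀ (j₁ : Fin m) (j₂ : Fin n),
          Hm i₁ j₁ * Hn i₂ j₂ * star (Hm k₁ j₁ * Hn k₂ j₂) =
          (Hm i₁ j₁ * star (Hm k₁ j₁)) * (Hn i₂ j₂ * star (Hn k₂ j₂)) := by
        intro j₁ j₂
        simp only [star_mul']
        ring
      rw [show (∑ j₁ : Fin m, ∑ j₂ : Fin n,
          Hm i₁ j₁ * Hn i₂ j₂ * star (Hm k₁ j₁ * Hn k₂ j₂)) =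
          (∑ j₁ : Fin m, Hm i₁ j₁ * star (Hm k₁ j₁)) *
          (∑ j₂ : Fin n, Hn i₂ j₂ * star (Hn k₂ j₂)) by
        rw [Finset.sum_mul_sum]
        exact Finset.sum_congr rfl fun j₁ _ => Finset.sum_congr rfl fun j₂ _ => key j₁ j₂]
      rw [hSm, hSn]
      push_cast
      split_ifs <;> simp_all <;> ring
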